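/- Let A ∈ ℝ^{n_s×n_s}, C ∈ ℝ^{n_o×n_s}, and let π be a residual feed-forward neural network with input dimension n_o, output dimension n_s, weights W^1, …, W^{L+2}, and activation σ with σ(0) = 0 that is sector bounded in [α_i, β_i] at every neuron. Let λ ∈ ℝ^{n_σ} with λ ≥ 0, and form R_π, R_ξ with input pre-matrix T = C, together with Ψ and M(λ). If there exists a symmetric positive definite P ∈ ℝ^{n_s×n_s} such that R_πᵀ [[AᵀP + PA, P], [P, 0]] R_π + R_ξᵀ Ψᵀ M(λ) Ψ R_ξ is negative definite, then there exists ε > 0 such that for every e ∈ ℝ^{n_s}: 2 eᵀ P (A e + π(C e)) ≤ −ε (‖e‖₂² + ‖π(C e)‖₂²). -/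

import Mathlib

open Matrix

/-- A residual feed-forward neural network with `Lm + 1` hidden layers,
input dimension `n₀`, output dimension `m`.  `hw l` is the width of hidden layer `l+1`
(0-based: hidden layers are indexed `0, …, Lm`).  `W l` is the weight matrix feeding
hidden layer `l`, `Wout` the output weight matrix `W^{L+1}` and `Wskip` the shortcut
connection weight matrix `W^{L+2}`. -/
structure ResNet (n₀ m : ℕ) where
  Lm : ℕ
  hw : ℕ → ℕ
  W : (l : ℕ) → Matrix (Fin (hw l)) (Fin (if l = 0 then n₀ else hw (l - 1))) ℝ
  Wout : Matrix (Fin m) (Fin (hw Lm)) ℝ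
  Wskip : Matrix (Fin m) (Fin n₀) ℝ

namespace ResNet

variable {n₀ m : ℕ}

/-- dimension of layer `l` (`l = 0` is the input layer, `l = 1, …, Lm+1` the hidden layers). -/
def dim (net : ResNet n₀ m) (l : ℕ) : ℕ := if l = 0 then n₀ else net.hw (l - 1)

/-- the forward pass through the hidden layers: `hfun σ net l x` is `h^l(x)`. -/
def hfun (σ : ℝ → ℝ) (net : ResNet n₀ m) : (l : ℕ) → (Fin n₀ → ℝ) → (Fin (net.dim l) → ℝ)
  | 0, x => x
  | l + 1, x => fun i => σ ((net.W l).mulVec (hfun σ net l x) i)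

/-- the output `π(x) = W^{L+1} h^L(x) + W^{L+2} x` of the residual network. -/
def apply (σ : ℝ → ℝ) (net : ResNet n₀ m) (x : Fin n₀ → ℝ) : Fin m → ℝ :=
  net.Wout.mulVec (hfun σ net (net.Lm + 1) x) + net.Wskip.mulVec x

/-- index type for the neurons (all hidden layers stacked). -/
abbrev NIdx (net : ResNet n₀ m) : Type := Σ l : Fin (net.Lm + 1), Fin (net.hw l)

/-- the first-layer weight matrix `W^1`. -/
def W1 (net : ResNet n₀ m) : Matrix (Fin (net.hw 0)) (Fin n₀) ℝ := net.W 0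

/-- the isolation block `N_{πw} = [0 ⋯ 0 W^{L+1}]`. -/
def Npiw (net : ResNet n₀ m) : Matrix (Fin m) net.NIdx ℝ :=
  Matrix.of fun i j =>
    if h : (j.1 : ℕ) = net.Lm then net.Wout i (Fin.cast (congrArg net.hw h) j.2) else 0

/-- the isolation block `N_{ξx} = [(W^1 T)ᵀ 0 ⋯ 0]ᵀ` for an input pre-matrix `T`. -/
def Nxix (net : ResNet n₀ m) {P : Type*} (T : Matrix (Fin n₀) P ℝ) :
    Matrix net.NIdx P ℝ :=
  Matrix.of fun j i =>
    if h : (j.1 : ℕ) = 0 then (net.W1 * T) (Fin.cast (congrArg net.hw h) j.2) i else 0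

/-- the isolation block `N_{ξw}` (block `(l, l-1)` is `W^l`). -/
def Nxiw (net : ResNet n₀ m) : Matrix net.NIdx net.NIdx ℝ :=
  Matrix.of fun i j =>
    if h : (j.1 : ℕ) + 1 = (i.1 : ℕ) then
      net.W i.1 i.2 (Fin.cast (by
        rw [if_neg (by omega : ¬ ((i.1 : ℕ)) = 0)]
        exact congrArg net.hw (by omega)) j.2)
    else 0

/-- the isolation matrix `R_π = [[I, 0], [N_{πx}, N_{πw}]]` with input pre-matrix `T`. -/
def Rpi (net : ResNet n₀ m) {P : Type*} [DecidableEq P]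
    (T : Matrix (Fin n₀) P ℝ) : Matrix (P ⊕ Fin m) (P ⊕ net.NIdx) ℝ :=
  Matrix.fromBlocks 1 0 (net.Wskip * T) net.Npiw

/-- the isolation matrix `R_ξ = [[N_{ξx}, N_{ξw}], [0, I]]` with input pre-matrix `T`. -/
def Rxi (net : ResNet n₀ m) {P : Type*}
    (T : Matrix (Fin n₀) P ℝ) : Matrix (net.NIdx ⊕ net.NIdx) (P ⊕ net.NIdx) ℝ :=
  Matrix.fromBlocks (net.Nxix T) net.Nxiw 0 1

end ResNet

/-- `Ψ = [[diag β, -I], [-diag α, I]]`. -/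
def Psi {I : Type*} [DecidableEq I] (a b : I → ℝ) : Matrix (I ⊕ I) (I ⊕ I) ℝ :=
  Matrix.fromBlocks (Matrix.diagonal b) (-1) (-(Matrix.diagonal a)) 1

/-- `M(λ) = [[0, diag λ], [diag λ, 0]]`. -/
def Mmat {I : Type*} [DecidableEq I] (lam : I → ℝ) : Matrix (I ⊕ I) (I ⊕ I) ℝ :=
  Matrix.fromBlocks 0 (Matrix.diagonal lam) (Matrix.diagonal lam) 0

/-- a matrix is negative definite if its quadratic form is negative on nonzero vectors. -/
def Matrix.NegDef {I : Type*} [Fintype I] (S : Matrix I I ℝ) : Prop :=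
  ∀ x : I → ℝ, x ≠ 0 → x ⬝ᵥ S.mulVec x < 0

/-- the Euclidean norm `‖v‖₂` of a finitely indexed real vector. -/
noncomputable def norm2 {I : Type*} [Fintype I] (v : I → ℝ) : ℝ := Real.sqrt (∑ i, v i ^ 2)

/-- `σ` is sector bounded in `[a, b]`. -/
def SectorBounded (σ : ℝ → ℝ) (a b : ℝ) : Prop := ∀ s : ℝ, 0 ≤ (σ s - a * s) * (b * s - σ s)

/-- `(C, A)` is an observable pair. -/
def Observable {n p : Type*} [Fintype n] [DecidableEq n]
    (C : Matrix p n ℝ) (A : Matrix n n ℝ) : Prop :=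
  ∀ x : n → ℝ, (∀ k : ℕ, (C * A ^ k).mulVec x = 0) → x = 0

/-- a real square matrix is Hurwitz if all its complex eigenvalues have negative real part. -/
def IsHurwitz {n : ℕ} (A : Matrix (Fin n) (Fin n) ℝ) : Prop :=
  ∀ μ ∈ spectrum ℂ (A.map (Complex.ofReal)), μ.re < 0

/-- induced `∞`-norm of a matrix: maximum absolute row sum. -/
noncomputable def rowSumNorm {I J : Type*} [Fintype J] (A : Matrix I J ℝ) : ℝ :=
  ⨆ i, ∑ j, |A i j|


section Aux

open Matrix

lemma negdef_quad_bound {I : Type*} [Fintype I] [DecidableEq I] {S : Matrix I I ℝ}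
    (hS : S.NegDef) : ∃ ε : ℝ, 0 < ε ∧ ∀ z : I → ℝ, z ⬝ᵥ S.mulVec z ≤ -ε * ∑ i, z i ^ 2 := by
  by_cases hI : Nonempty I
  · set f : EuclideanSpace ℝ I → ℝ := fun z => (z : I → ℝ) ⬝ᵥ S.mulVec z with hf
    have hcont : Continuous f := by
      have h1 : Continuous fun z : I → ℝ => z ⬝ᵥ S.mulVec z := by
        simp only [dotProduct, mulVec]
        exact continuous_finset_sum _ fun i _ => (continuous_apply i).mul
          (continuous_finset_sum _ fun j _ => continuous_const.mul (continuous_apply j))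
      exact h1.comp (PiLp.continuousLinearEquiv 2 ℝ (fun _ : I => ℝ)).continuous
    have hsne : (Metric.sphere (0 : EuclideanSpace ℝ I) 1).Nonempty := by
      refine ⟨EuclideanSpace.single hI.some 1, ?_⟩
      simp [mem_sphere_iff_norm, EuclideanSpace.norm_single]
    obtain ⟨y0, hy0mem, hy0max⟩ := (isCompact_sphere (0 : EuclideanSpace ℝ I) 1).exists_isMaxOn
      hsne hcont.continuousOn
    have hy0norm : ‖y0‖ = 1 := by simpa using hy0mem
    have hy0ne : (y0 : I → ℝ) ≠ 0 := by
      intro h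
      have : y0 = 0 := by ext i; exact congrFun h i
      rw [this] at hy0norm; simp at hy0norm
    have hM : f y0 < 0 := hS _ hy0ne
    refine ⟨-f y0, by linarith, fun z => ?_⟩
    by_cases hz : z = 0
    · simp [hz]
    · set zE : EuclideanSpace ℝ I := (WithLp.equiv 2 _).symm z with hzE
      have hzEne : zE ≠ 0 := by
        intro h; apply hz; ext i; exact congrFun (congrArg (WithLp.equiv 2 _) h) i
      have ht : 0 < ‖zE‖ := norm_pos_iff.mpr hzEne
      set y : EuclideanSpace ℝ I := ‖zE‖⁻¹ • zE with hy
      have hymem : y ∈ Metric.sphere (0 : EuclideanSpace ℝ I) 1 := by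
        simp [hy, norm_smul, abs_of_pos (inv_pos.mpr ht), inv_mul_cancel₀ ht.ne']
      have hfy : f y ≤ f y0 := hy0max hymem
      have hzy : z = ‖zE‖ • (y : I → ℝ) := by
        ext i
        show z i = ‖zE‖ * (‖zE‖⁻¹ • zE) i
        show z i = ‖zE‖ * (‖zE‖⁻¹ * z i)
        rw [← mul_assoc, mul_inv_cancel₀ ht.ne', one_mul]
      have hquad : z ⬝ᵥ S.mulVec z = ‖zE‖^2 * f y := by
        rw [hzy]
        rw [Matrix.mulVec_smul, smul_dotProduct, dotProduct_smul]
        simp [hf]; ring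
      have hsum : ∑ i, z i ^ 2 = ‖zE‖ ^ 2 := by
        rw [EuclideanSpace.norm_eq, Real.sq_sqrt (by positivity)]
        congr 1
        ext i
        rw [Real.norm_eq_abs, sq_abs]
        rfl
      rw [hquad, hsum]
      have h2 : 0 < ‖zE‖^2 := by positivity
      nlinarith [hfy, hM, h2]
  · refine ⟨1, one_pos, fun z => ?_⟩
    have : IsEmpty I := not_nonempty_iff.mp hI
    simp [dotProduct]

lemma mulVec_sq_le {I J : Type*} [Fintype I] [Fintype J] (R : Matrix I J ℝ) (z : J → ℝ) :
    ∑ i, (R.mulVec z i) ^ 2 ≤ (∑ i, ∑ j, R i j ^ 2) * ∑ j, z j ^ 2 := by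
  rw [Finset.sum_mul]
  apply Finset.sum_le_sum
  intro i _
  exact Finset.sum_mul_sq_le_sq_mul_sq Finset.univ (R i) z

lemma quad_conj {I J : Type*} [Fintype I] [Fintype J] (R : Matrix I J ℝ) (B : Matrix I I ℝ)
    (z : J → ℝ) : z ⬝ᵥ (Rᵀ * B * R) *ᵥ z = (R *ᵥ z) ⬝ᵥ B *ᵥ (R *ᵥ z) := by
  have h : Rᵀ *ᵥ (B *ᵥ (R *ᵥ z)) = (Rᵀ * B * R) *ᵥ z := by
    rw [Matrix.mulVec_mulVec, Matrix.mulVec_mulVec]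
  rw [← h, Matrix.dotProduct_mulVec, Matrix.vecMul_transpose]

lemma dot_symm_swap {n : ℕ} {P : Matrix (Fin n) (Fin n) ℝ} (hPsymm : Pᵀ = P)
    (a b : Fin n → ℝ) : a ⬝ᵥ P *ᵥ b = b ⬝ᵥ P *ᵥ a := by
  calc a ⬝ᵥ P *ᵥ b = (a ᵥ* P) ⬝ᵥ b := Matrix.dotProduct_mulVec a P b
    _ = (Pᵀ *ᵥ a) ⬝ᵥ b := by rw [Matrix.mulVec_transpose]
    _ = (P *ᵥ a) ⬝ᵥ b := by rw [hPsymm]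
    _ = b ⬝ᵥ P *ᵥ a := dotProduct_comm _ _

lemma lyap_block_quad {ns : ℕ} (A P : Matrix (Fin ns) (Fin ns) ℝ) (hPsymm : Pᵀ = P)
    (e u : Fin ns → ℝ) :
    Sum.elim e u ⬝ᵥ (Matrix.fromBlocks (Aᵀ * P + P * A) P P (0 : Matrix (Fin ns) (Fin ns) ℝ))
        *ᵥ Sum.elim e u = 2 * (e ⬝ᵥ P *ᵥ (A *ᵥ e + u)) := by
  rw [Matrix.fromBlocks_mulVec, sumElim_dotProduct_sumElim]
  have h0 : Sum.elim e u ∘ Sum.inl = e := rfl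
  have h1 : Sum.elim e u ∘ Sum.inr = u := rfl
  rw [h0, h1, Matrix.zero_mulVec, add_zero, Matrix.add_mulVec, dotProduct_add,
    dotProduct_add]
  have h2 : e ⬝ᵥ (Aᵀ * P) *ᵥ e = e ⬝ᵥ P *ᵥ (A *ᵥ e) := by
    rw [← Matrix.mulVec_mulVec, Matrix.dotProduct_mulVec e Aᵀ, Matrix.vecMul_transpose]
    exact dot_symm_swap hPsymm _ _
  have h3 : e ⬝ᵥ (P * A) *ᵥ e = e ⬝ᵥ P *ᵥ (A *ᵥ e) := by
    rw [← Matrix.mulVec_mulVec]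
  have h4 : u ⬝ᵥ P *ᵥ e = e ⬝ᵥ P *ᵥ u := dot_symm_swap hPsymm _ _
  rw [h2, h3, h4, Matrix.mulVec_add, dotProduct_add]
  ring

lemma Psi_mulVec {I : Type*} [Fintype I] [DecidableEq I] (a b ξ w : I → ℝ) :
    (Psi a b) *ᵥ Sum.elim ξ w
      = Sum.elim (fun i => b i * ξ i - w i) (fun i => w i - a i * ξ i) := by
  rw [Psi, Matrix.fromBlocks_mulVec]
  have h0 : Sum.elim ξ w ∘ Sum.inl = ξ := rfl
  have h1 : Sum.elim ξ w ∘ Sum.inr = w := rfl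
  rw [h0, h1]
  funext i
  rcases i with i | i
  · show (Matrix.diagonal b *ᵥ ξ + (-1 : Matrix I I ℝ) *ᵥ w) i = b i * ξ i - w i
    rw [Pi.add_apply, Matrix.mulVec_diagonal, Matrix.neg_mulVec, Matrix.one_mulVec]
    show b i * ξ i + (-w) i = b i * ξ i - w i
    simp [sub_eq_add_neg]
  · show ((-Matrix.diagonal a) *ᵥ ξ + (1 : Matrix I I ℝ) *ᵥ w) i = w i - a i * ξ i
    rw [Pi.add_apply, Matrix.neg_mulVec, Matrix.one_mulVec, Pi.neg_apply,
      Matrix.mulVec_diagonal]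
    ring

lemma Mmat_quad {I : Type*} [Fintype I] [DecidableEq I] (lam a b : I → ℝ) :
    Sum.elim a b ⬝ᵥ (Mmat lam) *ᵥ Sum.elim a b = 2 * ∑ i, lam i * (a i * b i) := by
  rw [Mmat, Matrix.fromBlocks_mulVec]
  have h0 : Sum.elim a b ∘ Sum.inl = a := rfl
  have h1 : Sum.elim a b ∘ Sum.inr = b := rfl
  rw [h0, h1, Matrix.zero_mulVec, Matrix.zero_mulVec, zero_add, add_zero,
    sumElim_dotProduct_sumElim]
  simp only [dotProduct, Matrix.mulVec_diagonal]
  rw [Finset.mul_sum, ← Finset.sum_add_distrib]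
  apply Finset.sum_congr rfl
  intro i _
  ring

namespace ResNet

variable {n₀ m : ℕ}

/-- the pre-activations of all neurons. -/
def preact (σ : ℝ → ℝ) (net : ResNet n₀ m) (x : Fin n₀ → ℝ) (j : net.NIdx) : ℝ :=
  (net.W j.1).mulVec (ResNet.hfun σ net j.1 x) j.2

/-- the activations of all neurons. -/
def act (σ : ℝ → ℝ) (net : ResNet n₀ m) (x : Fin n₀ → ℝ) (j : net.NIdx) : ℝ :=
  σ (preact σ net x j)

lemma Npiw_mulVec (σ : ℝ → ℝ) (net : ResNet n₀ m) (x : Fin n₀ → ℝ) :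
    net.Npiw.mulVec (act σ net x) = net.Wout.mulVec (ResNet.hfun σ net (net.Lm + 1) x) := by
  funext i
  simp only [Matrix.mulVec, dotProduct, Npiw, Matrix.of_apply]
  rw [show (Finset.univ : Finset net.NIdx) = Finset.univ.sigma (fun _ => Finset.univ) from
    (Finset.univ_sigma_univ).symm, Finset.sum_sigma]
  rw [Finset.sum_eq_single (⟨net.Lm, Nat.lt_succ_self _⟩ : Fin (net.Lm + 1))]
  · apply Finset.sum_congr rfl
    intro k _
    rw [dif_pos rfl]
    rfl
  · intro l _ hl
    have hlv : (l : ℕ) ≠ net.Lm := by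
      intro h; exact hl (Fin.ext h)
    apply Finset.sum_eq_zero
    intro k _
    rw [dif_neg hlv, zero_mul]
  · intro h; exact absurd (Finset.mem_univ _) h

lemma Nxi_mulVec (σ : ℝ → ℝ) (net : ResNet n₀ m) {Q : Type*} [Fintype Q]
    (T : Matrix (Fin n₀) Q ℝ) (e : Q → ℝ) :
    (net.Nxix T).mulVec e + net.Nxiw.mulVec (act σ net (T.mulVec e))
      = preact σ net (T.mulVec e) := by
  funext j
  obtain ⟨⟨lv, hl⟩, k⟩ := j
  rw [Pi.add_apply]
  rcases lv with _ | t
  · have h1 : (net.Nxix T).mulVec e ⟨⟨0, hl⟩, k⟩ = (net.W1 * T).mulVec e k := by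
      simp only [Matrix.mulVec, dotProduct, Nxix, Matrix.of_apply]
      apply Finset.sum_congr rfl
      intro q _
      rw [dif_pos trivial]
      rfl
    have h2 : net.Nxiw.mulVec (act σ net (T.mulVec e)) ⟨⟨0, hl⟩, k⟩ = 0 := by
      simp only [Matrix.mulVec, dotProduct, Nxiw, Matrix.of_apply]
      apply Finset.sum_eq_zero
      intro j' _
      rw [dif_neg (by simp), zero_mul]
    rw [h1, h2, add_zero, ← Matrix.mulVec_mulVec]
    rfl
  · have h1 : (net.Nxix T).mulVec e ⟨⟨t + 1, hl⟩, k⟩ = 0 := by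
      simp only [Matrix.mulVec, dotProduct, Nxix, Matrix.of_apply]
      apply Finset.sum_eq_zero
      intro q _
      rw [dif_neg (Nat.succ_ne_zero t), zero_mul]
    have h2 : net.Nxiw.mulVec (act σ net (T.mulVec e)) ⟨⟨t + 1, hl⟩, k⟩
        = (net.W (t + 1)).mulVec (ResNet.hfun σ net (t + 1) (T.mulVec e)) k := by
      simp only [Matrix.mulVec, dotProduct, Nxiw, Matrix.of_apply]
      rw [show (Finset.univ : Finset net.NIdx) = Finset.univ.sigma (fun _ => Finset.univ) from
        (Finset.univ_sigma_univ).symm, Finset.sum_sigma]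
      rw [Finset.sum_eq_single (⟨t, by omega⟩ : Fin (net.Lm + 1))]
      · apply Finset.sum_congr rfl
        intro k' _
        rw [dif_pos rfl]
        rfl
      · intro l _ hl'
        have hne : (l : ℕ) + 1 ≠ t + 1 := by
          intro h
          exact hl' (Fin.ext (show (l : ℕ) = t by omega))
        apply Finset.sum_eq_zero
        intro k' _
        rw [dif_neg hne, zero_mul]
      · intro h; exact absurd (Finset.mem_univ _) h
    rw [h1, h2, zero_add]
    rfl

lemma Rpi_mulVec (σ : ℝ → ℝ) (net : ResNet n₀ m) {Q : Type*} [Fintype Q] [DecidableEq Q]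
    (T : Matrix (Fin n₀) Q ℝ) (e : Q → ℝ) :
    (net.Rpi T) *ᵥ (Sum.elim e (act σ net (T.mulVec e)))
      = Sum.elim e (net.apply σ (T.mulVec e)) := by
  rw [Rpi, Matrix.fromBlocks_mulVec]
  have h0 : Sum.elim e (act σ net (T.mulVec e)) ∘ Sum.inl = e := rfl
  have h1 : Sum.elim e (act σ net (T.mulVec e)) ∘ Sum.inr = act σ net (T.mulVec e) := rfl
  rw [h0, h1, Matrix.one_mulVec, Matrix.zero_mulVec, add_zero, Npiw_mulVec,
    ← Matrix.mulVec_mulVec, ResNet.apply, add_comm]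

lemma Rxi_mulVec (σ : ℝ → ℝ) (net : ResNet n₀ m) {Q : Type*} [Fintype Q]
    (T : Matrix (Fin n₀) Q ℝ) (e : Q → ℝ) :
    (net.Rxi T) *ᵥ (Sum.elim e (act σ net (T.mulVec e)))
      = Sum.elim (preact σ net (T.mulVec e)) (act σ net (T.mulVec e)) := by
  rw [Rxi, Matrix.fromBlocks_mulVec]
  have h0 : Sum.elim e (act σ net (T.mulVec e)) ∘ Sum.inl = e := rfl
  have h1 : Sum.elim e (act σ net (T.mulVec e)) ∘ Sum.inr = act σ net (T.mulVec e) := rfl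
  rw [h0, h1, Matrix.zero_mulVec, Matrix.one_mulVec, zero_add, Nxi_mulVec]

end ResNet

end Aux

/-- The key quadratic-form estimate in the proof of Theorem 1: if the LMI has a symmetric
positive definite solution `P`, then there exists `ε > 0` such that
`2 eᵀ P (A e + π(C e)) ≤ -ε (‖e‖₂² + ‖π(C e)‖₂²)` for every `e`. -/
theorem lyapunov_derivative_estimate
    {ns no : ℕ} (A : Matrix (Fin ns) (Fin ns) ℝ)
    (C : Matrix (Fin no) (Fin ns) ℝ)
    {σ : ℝ → ℝ} (hσ0 : σ 0 = 0)
    (net : ResNet no ns)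
    (α β : net.NIdx → ℝ) (hαβ : ∀ i, α i ≤ β i)
    (hsec : ∀ i : net.NIdx, SectorBounded σ (α i) (β i))
    (lam : net.NIdx → ℝ) (hlam : ∀ i, 0 ≤ lam i)
    (P : Matrix (Fin ns) (Fin ns) ℝ) (hP : P.PosDef)
    (hLMI : Matrix.NegDef
      ((net.Rpi C)ᵀ * Matrix.fromBlocks (Aᵀ * P + P * A) P P 0 * net.Rpi C
        + (net.Rxi C)ᵀ * (Psi α β)ᵀ * Mmat lam * Psi α β * net.Rxi C)) :
    ∃ ε : ℝ, 0 < ε ∧ ∀ e : Fin ns → ℝ,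
      2 * (e ⬝ᵥ P.mulVec (A.mulVec e + net.apply σ (C.mulVec e)))
        ≤ -ε * ((norm2 e) ^ 2 + (norm2 (net.apply σ (C.mulVec e))) ^ 2) := by
  classical
  obtain ⟨ε, hε, hbound⟩ := negdef_quad_bound hLMI
  have hPsymm : Pᵀ = P := by
    have h := hP.1
    rwa [Matrix.IsHermitian, Matrix.conjTranspose_eq_transpose_of_trivial] at h
  set K : ℝ := (∑ s, ∑ t, (net.Rpi C) s t ^ 2) + 1 with hKdef
  have hKpos : 0 < K := by positivity
  refine ⟨ε / K, div_pos hε hKpos, fun e => ?_⟩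
  set w : net.NIdx → ℝ := ResNet.act σ net (C.mulVec e) with hwdef
  set z : (Fin ns ⊕ net.NIdx) → ℝ := Sum.elim e w with hzdef
  have hq := hbound z
  rw [Matrix.add_mulVec, dotProduct_add] at hq
  -- first quadratic term
  have t1 : z ⬝ᵥ ((net.Rpi C)ᵀ * Matrix.fromBlocks (Aᵀ * P + P * A) P P 0 * net.Rpi C) *ᵥ z
      = 2 * (e ⬝ᵥ P.mulVec (A.mulVec e + net.apply σ (C.mulVec e))) := by
    rw [quad_conj, hzdef, hwdef, ResNet.Rpi_mulVec, lyap_block_quad A P hPsymm]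
  -- second quadratic term is nonnegative
  have t2 : 0 ≤ z ⬝ᵥ ((net.Rxi C)ᵀ * (Psi α β)ᵀ * Mmat lam * Psi α β * net.Rxi C) *ᵥ z := by
    have hassoc : (net.Rxi C)ᵀ * (Psi α β)ᵀ * Mmat lam * Psi α β * net.Rxi C
        = (Psi α β * net.Rxi C)ᵀ * Mmat lam * (Psi α β * net.Rxi C) := by
      simp only [Matrix.transpose_mul, Matrix.mul_assoc]
    rw [hassoc, quad_conj, ← Matrix.mulVec_mulVec, hzdef, hwdef, ResNet.Rxi_mulVec,
      Psi_mulVec, Mmat_quad]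
    have hterm : ∀ j : net.NIdx, 0 ≤ lam j *
        ((β j * ResNet.preact σ net (C.mulVec e) j - ResNet.act σ net (C.mulVec e) j) *
          (ResNet.act σ net (C.mulVec e) j - α j * ResNet.preact σ net (C.mulVec e) j)) := by
      intro j
      apply mul_nonneg (hlam j)
      have hsj := hsec j (ResNet.preact σ net (C.mulVec e) j)
      have hact : ResNet.act σ net (C.mulVec e) j = σ (ResNet.preact σ net (C.mulVec e) j) := rfl
      rw [hact]
      nlinarith [hsj]
    have hsum2 : (0:ℝ) ≤ ∑ j : net.NIdx, lam j *
        ((β j * ResNet.preact σ net (C.mulVec e) j - ResNet.act σ net (C.mulVec e) j) *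
          (ResNet.act σ net (C.mulVec e) j - α j * ResNet.preact σ net (C.mulVec e) j)) :=
      Finset.sum_nonneg fun j _ => hterm j
    linarith
  rw [t1] at hq
  have hmain : 2 * (e ⬝ᵥ P.mulVec (A.mulVec e + net.apply σ (C.mulVec e)))
      ≤ -ε * ∑ i, z i ^ 2 := by linarith
  have hRz : (net.Rpi C) *ᵥ z = Sum.elim e (net.apply σ (C.mulVec e)) := by
    rw [hzdef, hwdef]; exact ResNet.Rpi_mulVec σ net C e
  have hnorm : (norm2 e) ^ 2 + (norm2 (net.apply σ (C.mulVec e))) ^ 2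
      = ∑ s, ((net.Rpi C) *ᵥ z) s ^ 2 := by
    rw [hRz, Fintype.sum_sum_type, norm2, norm2, Real.sq_sqrt (by positivity),
      Real.sq_sqrt (by positivity)]
    rfl
  have hCS := mulVec_sq_le (net.Rpi C) z
  have hz2 : 0 ≤ ∑ i, z i ^ 2 := Finset.sum_nonneg fun i _ => sq_nonneg _
  have hQK : (norm2 e) ^ 2 + (norm2 (net.apply σ (C.mulVec e))) ^ 2 ≤ K * ∑ i, z i ^ 2 := by
    rw [hnorm, hKdef]
    calc ∑ s, ((net.Rpi C) *ᵥ z) s ^ 2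
        ≤ (∑ s, ∑ t, (net.Rpi C) s t ^ 2) * ∑ i, z i ^ 2 := hCS
      _ ≤ ((∑ s, ∑ t, (net.Rpi C) s t ^ 2) + 1) * ∑ i, z i ^ 2 := by nlinarith [hz2]
  have hQnn : 0 ≤ (norm2 e) ^ 2 + (norm2 (net.apply σ (C.mulVec e))) ^ 2 := by positivity
  have hfin : (ε / K) * ((norm2 e) ^ 2 + (norm2 (net.apply σ (C.mulVec e))) ^ 2)
      ≤ ε * ∑ i, z i ^ 2 := by
    calc (ε / K) * ((norm2 e) ^ 2 + (norm2 (net.apply σ (C.mulVec e))) ^ 2)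
        ≤ (ε / K) * (K * ∑ i, z i ^ 2) :=
          mul_le_mul_of_nonneg_left hQK (le_of_lt (div_pos hε hKpos))
      _ = ε * ∑ i, z i ^ 2 := by field_simp
  linarith
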